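/- Let n ≥ r and let every k-coloring of the edges of K_r contain a monochromatic copy of K_ℓ (i.e., r is k-Ramsey for K_ℓ). Then in any k-coloring of the edges of K_n there are at least n^ℓ / (k · r^ℓ) monochromatic copies of K_ℓ all in the same color. -/

import Mathlib

open scoped Classical

private lemma pow_mul_descFactorial_le {ℓ r n : ℕ} (hlr : ℓ ≤ r) (hrn : r ≤ n) :
    n ^ ℓ * r.descFactorial ℓ ≤ r ^ ℓ * n.descFactorial ℓ := by
  induction ℓ with
  | zero => simp
  | succ m ih =>
      have hmr : m ≤ r := le_of_lt (Nat.lt_of_succ_le hlr)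
      have ih' := ih hmr
      have h1 : n * (r - m) ≤ r * (n - m) := by
        obtain ⟨a, rfl⟩ := Nat.exists_eq_add_of_le hmr
        obtain ⟨b, rfl⟩ := Nat.exists_eq_add_of_le hrn
        simp only [Nat.add_sub_cancel_left, Nat.sub_add_eq]
        have : m + a + b - m = a + b := by omega
        rw [this]
        nlinarith
      rw [Nat.descFactorial_succ, Nat.descFactorial_succ, pow_succ, pow_succ]
      calc n ^ m * n * ((r - m) * Nat.descFactorial r m)
          = (n * (r - m)) * (n ^ m * Nat.descFactorial r m) := by ring
        _ ≤ (r * (n - m)) * (r ^ m * Nat.descFactorial n m) := Nat.mul_le_mul h1 ih'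
        _ = r ^ m * r * ((n - m) * Nat.descFactorial n m) := by ring

private lemma pow_mul_choose_le {ℓ r n : ℕ} (hlr : ℓ ≤ r) (hrn : r ≤ n) :
    n ^ ℓ * (n - ℓ).choose (r - ℓ) ≤ r ^ ℓ * n.choose r := by
  have h1 : n ^ ℓ * Nat.choose r ℓ ≤ r ^ ℓ * Nat.choose n ℓ := by
    have h := pow_mul_descFactorial_le hlr hrn
    rw [Nat.descFactorial_eq_factorial_mul_choose, Nat.descFactorial_eq_factorial_mul_choose] at h
    have h' : Nat.factorial ℓ * (n ^ ℓ * Nat.choose r ℓ) ≤ Nat.factorial ℓ * (r ^ ℓ * Nat.choose n ℓ) := by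
      calc Nat.factorial ℓ * (n ^ ℓ * Nat.choose r ℓ) = n ^ ℓ * (Nat.factorial ℓ * Nat.choose r ℓ) := by ring
        _ ≤ r ^ ℓ * (Nat.factorial ℓ * Nat.choose n ℓ) := h
        _ = Nat.factorial ℓ * (r ^ ℓ * Nat.choose n ℓ) := by ring
    exact Nat.le_of_mul_le_mul_left h' (Nat.factorial_pos ℓ)
  have hcl : 0 < Nat.choose r ℓ := Nat.choose_pos hlr
  have key := Nat.choose_mul (n := n) (k := r) (s := ℓ) hlr
  have h2 : (n ^ ℓ * (n - ℓ).choose (r - ℓ)) * Nat.choose r ℓ ≤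
      (r ^ ℓ * Nat.choose n r) * Nat.choose r ℓ := by
    calc (n ^ ℓ * (n - ℓ).choose (r - ℓ)) * Nat.choose r ℓ
        = (n ^ ℓ * Nat.choose r ℓ) * (n - ℓ).choose (r - ℓ) := by ring
      _ ≤ (r ^ ℓ * Nat.choose n ℓ) * (n - ℓ).choose (r - ℓ) := Nat.mul_le_mul_right _ h1
      _ = r ^ ℓ * (Nat.choose n ℓ * (n - ℓ).choose (r - ℓ)) := by ring
      _ = r ^ ℓ * (Nat.choose n r * Nat.choose r ℓ) := by rw [← key]
      _ = (r ^ ℓ * Nat.choose n r) * Nat.choose r ℓ := by ring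
  exact Nat.le_of_mul_le_mul_right h2 hcl

/-- Quantitative Ramsey counting (Fact 2.6): if `r` is `k`-Ramsey for `K_ℓ` and `n ≥ r`,
then any `k`-coloring of the edges of `K_n` contains at least `n^ℓ / (k·r^ℓ)`
monochromatic copies of `K_ℓ`, all in the same color. -/
theorem stmt_1 (k ℓ r n : ℕ) (hk : 1 ≤ k) (hlr : ℓ ≤ r) (hrn : r ≤ n)
    (hRam : ∀ c : Finset (Fin r) → Fin k, ∃ S : Finset (Fin r), S.card = ℓ ∧
      ∃ x : Fin k, ∀ p ⊆ S, p.card = 2 → c p = x)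
    (c : Finset (Fin n) → Fin k) :
    ∃ x : Fin k, ((n : ℝ) ^ ℓ / ((k : ℝ) * (r : ℝ) ^ ℓ)) ≤
      ((Finset.univ.filter (fun S : Finset (Fin n) =>
        S.card = ℓ ∧ ∀ p ⊆ S, p.card = 2 → c p = x)).card : ℝ) := by
  have key : ∀ R : Finset (Fin n), ∃ x : Fin k, ∃ S : Finset (Fin n),
      R.card = r → (S ⊆ R ∧ S.card = ℓ ∧ ∀ p ⊆ S, p.card = 2 → c p = x) := by
    intro R
    by_cases hR : R.card = r
    · let e := R.orderIsoOfFin hR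
      let emb : Fin r → Fin n := fun i => (e i : Fin n)
      have hinj : Function.Injective emb := fun a b hab => e.injective (Subtype.ext hab)
      obtain ⟨S', hS'card, x, hx⟩ := hRam (fun p => c (p.image emb))
      refine ⟨x, S'.image emb, fun _ => ⟨?_, ?_, ?_⟩⟩
      · intro a ha
        obtain ⟨b, _, rfl⟩ := Finset.mem_image.1 ha
        exact (e b).2
      · rw [Finset.card_image_of_injective _ hinj, hS'card]
      · intro p hp hp2
        set q := S'.filter (fun i => emb i ∈ p) with hq
        have hqS : q ⊆ S' := Finset.filter_subset _ _
        have himg : q.image emb = p := by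
          apply Finset.Subset.antisymm
          · intro a ha
            obtain ⟨b, hb, rfl⟩ := Finset.mem_image.1 ha
            exact (Finset.mem_filter.1 hb).2
          · intro a ha
            obtain ⟨b, hb, rfl⟩ := Finset.mem_image.1 (hp ha)
            exact Finset.mem_image.2 ⟨b, Finset.mem_filter.2 ⟨hb, ha⟩, rfl⟩
        have hq2 : q.card = 2 := by
          rw [← hp2, ← himg, Finset.card_image_of_injective _ hinj]
        have := hx q hqS hq2
        rwa [himg] at this
    · exact ⟨⟨0, hk⟩, ∅, fun h => absurd h hR⟩
  choose col mset hkey using key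
  set A := Finset.powersetCard r (Finset.univ : Finset (Fin n)) with hA
  have hAcard : A.card = n.choose r := by
    rw [hA, Finset.card_powersetCard, Finset.card_univ, Fintype.card_fin]
  have hAmem : ∀ R ∈ A, R.card = r := fun R hR => (Finset.mem_powersetCard.1 hR).2
  have hsum : A.card = ∑ x : Fin k, (A.filter (fun R => col R = x)).card :=
    Finset.card_eq_sum_card_fiberwise (fun R _ => Finset.mem_univ (col R))
  obtain ⟨x, hx⟩ : ∃ x : Fin k, A.card ≤ k * (A.filter (fun R => col R = x)).card := by
    by_contra h
    push_neg at h
    have hlt : ∑ x : Fin k, k * (A.filter (fun R => col R = x)).card <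
        ∑ _x : Fin k, A.card :=
      Finset.sum_lt_sum_of_nonempty ⟨⟨0, hk⟩, Finset.mem_univ _⟩ (fun x _ => h x)
    rw [← Finset.mul_sum, ← hsum, Finset.sum_const, Finset.card_univ, Fintype.card_fin,
      smul_eq_mul] at hlt
    exact absurd hlt (by exact lt_irrefl _)
  refine ⟨x, ?_⟩
  set M := Finset.univ.filter (fun S : Finset (Fin n) =>
      S.card = ℓ ∧ ∀ p ⊆ S, p.card = 2 → c p = x) with hM
  set Ax := A.filter (fun R => col R = x) with hAx
  have hfiber : ∀ S ∈ Ax.image mset,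
      (Ax.filter fun R => mset R = S).card ≤ (n - ℓ).choose (r - ℓ) := by
    intro S hS
    obtain ⟨R₀, hR₀, rfl⟩ := Finset.mem_image.1 hS
    have hR₀r : R₀.card = r := hAmem _ (Finset.mem_filter.1 hR₀).1
    obtain ⟨_, hScard, _⟩ := hkey R₀ hR₀r
    have hstep : (Ax.filter fun R => mset R = mset R₀).card ≤
        (Finset.powersetCard (r - ℓ) (mset R₀)ᶜ).card := by
      apply Finset.card_le_card_of_injOn (fun R => R \ mset R₀)
      · intro R hR
        obtain ⟨hRA, hmR⟩ := Finset.mem_filter.1 hR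
        have hRr : R.card = r := hAmem _ (Finset.mem_filter.1 hRA).1
        obtain ⟨hsub, _, _⟩ := hkey R hRr
        rw [hmR] at hsub
        refine Finset.mem_powersetCard.2 ⟨?_, ?_⟩
        · intro a ha
          simp only [Finset.mem_compl]
          exact (Finset.mem_sdiff.1 ha).2
        · rw [Finset.card_sdiff_of_subset hsub, hRr, hScard]
      · intro R hR R' hR' hEq
        simp only [Finset.coe_filter, Set.mem_setOf_eq] at hR hR'
        obtain ⟨hRA, hmR⟩ := hR
        obtain ⟨hRA', hmR'⟩ := hR'
        have hRr : R.card = r := hAmem _ (Finset.mem_filter.1 hRA).1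
        have hRr' : R'.card = r := hAmem _ (Finset.mem_filter.1 hRA').1
        obtain ⟨hsub, _, _⟩ := hkey R hRr
        obtain ⟨hsub', _, _⟩ := hkey R' hRr'
        rw [hmR] at hsub
        rw [hmR'] at hsub'
        have hEq' : R \ mset R₀ = R' \ mset R₀ := hEq
        calc R = R \ mset R₀ ∪ mset R₀ := (Finset.sdiff_union_of_subset hsub).symm
          _ = R' \ mset R₀ ∪ mset R₀ := by rw [hEq']
          _ = R' := Finset.sdiff_union_of_subset hsub'
    have hcompl : ((mset R₀)ᶜ : Finset (Fin n)).card = n - ℓ := by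
      rw [Finset.card_compl, hScard, Fintype.card_fin]
    calc (Ax.filter fun R => mset R = mset R₀).card
        ≤ (Finset.powersetCard (r - ℓ) (mset R₀)ᶜ).card := hstep
      _ = (n - ℓ).choose (r - ℓ) := by rw [Finset.card_powersetCard, hcompl]
  have himgM : Ax.image mset ⊆ M := by
    intro S hS
    obtain ⟨R, hR, rfl⟩ := Finset.mem_image.1 hS
    obtain ⟨hRA, hcolR⟩ := Finset.mem_filter.1 hR
    have hRr := hAmem _ hRA
    obtain ⟨_, hcard', hmono⟩ := hkey R hRr
    refine Finset.mem_filter.2 ⟨Finset.mem_univ _, hcard', ?_⟩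
    rw [← hcolR]
    exact hmono
  have h3 : Ax.card ≤ (n - ℓ).choose (r - ℓ) * (Ax.image mset).card :=
    Finset.card_le_mul_card_image _ _ hfiber
  have h4 : (Ax.image mset).card ≤ M.card := Finset.card_le_card himgM
  have hchain : n.choose r ≤ k * ((n - ℓ).choose (r - ℓ) * M.card) := by
    calc n.choose r = A.card := hAcard.symm
      _ ≤ k * Ax.card := hx
      _ ≤ k * ((n - ℓ).choose (r - ℓ) * (Ax.image mset).card) := Nat.mul_le_mul_left _ h3
      _ ≤ k * ((n - ℓ).choose (r - ℓ) * M.card) :=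
          Nat.mul_le_mul_left _ (Nat.mul_le_mul_left _ h4)
  have hD : 0 < (n - ℓ).choose (r - ℓ) := Nat.choose_pos (by omega)
  have hnat : n ^ ℓ ≤ k * r ^ ℓ * M.card := by
    have hB := pow_mul_choose_le hlr hrn
    have h5 : n ^ ℓ * (n - ℓ).choose (r - ℓ) ≤
        (k * r ^ ℓ * M.card) * (n - ℓ).choose (r - ℓ) := by
      calc n ^ ℓ * (n - ℓ).choose (r - ℓ) ≤ r ^ ℓ * n.choose r := hB
        _ ≤ r ^ ℓ * (k * ((n - ℓ).choose (r - ℓ) * M.card)) := Nat.mul_le_mul_left _ hchain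
        _ = (k * r ^ ℓ * M.card) * (n - ℓ).choose (r - ℓ) := by ring
    exact Nat.le_of_mul_le_mul_right h5 hD
  have hrp : 0 < r ^ ℓ := by
    rcases Nat.eq_zero_or_pos ℓ with rfl | hl
    · simp
    · exact Nat.pow_pos (by omega)
  have hkr : (0 : ℝ) < (k : ℝ) * (r : ℝ) ^ ℓ := by
    have h1 : (0 : ℝ) < (k : ℝ) := by exact_mod_cast hk
    have h2 : (0 : ℝ) < (r : ℝ) ^ ℓ := by exact_mod_cast hrp
    exact mul_pos h1 h2
  rw [div_le_iff₀ hkr]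
  have hcast : ((n ^ ℓ : ℕ) : ℝ) ≤ ((k * r ^ ℓ * M.card : ℕ) : ℝ) := Nat.cast_le.2 hnat
  push_cast at hcast
  nlinarith [hcast]
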